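/- Let θ = Θ_S ∘ Λ_{π,t} be an automorphism of B_k and let σ_θ be the permutation of {1,…,2^k} such that (Φ_k(θ(a)))_i = ((Φ_k(a))_{σ_θ^{−1}(i)})^{p^t} for all a ∈ B_k. Define Ξ_θ : F_{p^r}^{n·2^k} → F_{p^r}^{n·2^k} by viewing a vector as n consecutive blocks y^{(1)},…,y^{(n)} of length 2^k, cyclically shifting the blocks by one block, and applying to each block y the map (y_j)_j ↦ ((y_{σ_θ^{−1}(j)})^{p^t})_j. Then for every B_k-submodule C of B_k^n, the set Φ̄_k(C) is fixed setwise by Ξ_θ if and only if C is a θ-cyclic code. -/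

import Mathlib

open MvPolynomial

set_option synthInstance.maxHeartbeats 400000
set_option maxHeartbeats 1000000

noncomputable def relIdeal (p r k : ℕ) [Fact p.Prime] : Ideal (MvPolynomial (Fin k) (GaloisField p r)) :=
  Ideal.span (Set.range fun i : Fin k => X i ^ 2 - X i)

abbrev B (p r k : ℕ) [Fact p.Prime] :=
  MvPolynomial (Fin k) (GaloisField p r) ⧸ relIdeal p r k

noncomputable def v (p r k : ℕ) [Fact p.Prime] (i : Fin k) : B p r k :=
  Ideal.Quotient.mk _ (X i)

lemma v_idem (p r k : ℕ) [Fact p.Prime] (i : Fin k) : v p r k i ^ 2 = v p r k i := by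
  have h : (X i ^ 2 - X i : MvPolynomial (Fin k) (GaloisField p r)) ∈ relIdeal p r k :=
    Ideal.subset_span ⟨i, rfl⟩
  have h2 := (Ideal.Quotient.eq_zero_iff_mem).mpr h
  rw [map_sub, map_pow] at h2
  have h3 := sub_eq_zero.mp h2
  simpa [v] using h3

lemma one_sub_v_idem (p r k : ℕ) [Fact p.Prime] (i : Fin k) :
    (1 - v p r k i) ^ 2 = 1 - v p r k i := by
  have h : (1 - v p r k i) ^ 2 = 1 - 2 * v p r k i + v p r k i ^ 2 := by ring
  rw [h, v_idem]; ring

noncomputable def ThAux (p r k : ℕ) [Fact p.Prime] (S : Finset (Fin k)) :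
    MvPolynomial (Fin k) (GaloisField p r) →+* B p r k :=
  (aeval (fun i : Fin k => if i ∈ S then 1 - v p r k i else v p r k i)).toRingHom

lemma ThAux_cond (p r k : ℕ) [Fact p.Prime] (S : Finset (Fin k)) :
    relIdeal p r k ≤ RingHom.ker (ThAux p r k S) := by
  refine Ideal.span_le.mpr ?_
  rintro _ ⟨i, rfl⟩
  simp only [SetLike.mem_coe, RingHom.mem_ker, ThAux, AlgHom.toRingHom_eq_coe,
    RingHom.coe_coe, map_sub, map_pow, aeval_X]
  by_cases h : i ∈ S
  · rw [if_pos h, one_sub_v_idem, sub_self]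
  · rw [if_neg h, v_idem, sub_self]

/-- The automorphism `Θ_S` of `B_k`, determined by `v_i ↦ 1 - v_i` for `i ∈ S` and
`v_i ↦ v_i` otherwise, fixing `F_{p^r}` pointwise. -/
noncomputable def Th (p r k : ℕ) [Fact p.Prime] (S : Finset (Fin k)) :
    B p r k →+* B p r k :=
  Ideal.Quotient.lift (relIdeal p r k) (ThAux p r k S) (fun _ ha => ThAux_cond p r k S ha)

noncomputable def LamAux (p r k : ℕ) [Fact p.Prime] (π : Equiv.Perm (Fin k)) (t : ℕ) :
    MvPolynomial (Fin k) (GaloisField p r) →+* B p r k :=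
  eval₂Hom ((Ideal.Quotient.mk (relIdeal p r k)).comp
      ((C : GaloisField p r →+* MvPolynomial (Fin k) (GaloisField p r)).comp
        (iterateFrobenius (GaloisField p r) p t)))
    (fun i => v p r k (π i))

lemma LamAux_cond (p r k : ℕ) [Fact p.Prime] (π : Equiv.Perm (Fin k)) (t : ℕ) :
    relIdeal p r k ≤ RingHom.ker (LamAux p r k π t) := by
  refine Ideal.span_le.mpr ?_
  rintro _ ⟨i, rfl⟩
  simp only [SetLike.mem_coe, RingHom.mem_ker, LamAux, map_sub, map_pow, eval₂Hom_X']
  rw [v_idem, sub_self]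

/-- The automorphism `Λ_{π,t}` of `B_k`, acting on `F_{p^r}` as the Frobenius power
`α ↦ α^{p^t}` and sending `v_i ↦ v_{π(i)}`. -/
noncomputable def Lam (p r k : ℕ) [Fact p.Prime] (π : Equiv.Perm (Fin k)) (t : ℕ) :
    B p r k →+* B p r k :=
  Ideal.Quotient.lift (relIdeal p r k) (LamAux p r k π t) (fun _ ha => LamAux_cond p r k π t ha)

noncomputable def PhiAux (p r k : ℕ) [Fact p.Prime] :
    MvPolynomial (Fin k) (GaloisField p r) →+* (Fin (2 ^ k) → GaloisField p r) :=
  Pi.ringHom fun j =>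
    eval₂Hom (RingHom.id (GaloisField p r))
      (fun i : Fin k => if Nat.testBit (j : ℕ) (i : ℕ) then 1 else 0)

lemma PhiAux_cond (p r k : ℕ) [Fact p.Prime] :
    relIdeal p r k ≤ RingHom.ker (PhiAux p r k) := by
  refine Ideal.span_le.mpr ?_
  rintro _ ⟨i, rfl⟩
  simp only [SetLike.mem_coe, RingHom.mem_ker, PhiAux]
  funext j
  show eval₂Hom (RingHom.id (GaloisField p r))
    (fun i : Fin k => if Nat.testBit (j : ℕ) (i : ℕ) then 1 else 0) (X i ^ 2 - X i) = 0
  simp only [Pi.ringHom_apply, map_sub, map_pow, eval₂Hom_X']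
  by_cases h : Nat.testBit (j : ℕ) (i : ℕ) <;> simp [h]

/-- The Gray map `Φ_k : B_k → F_{p^r}^{2^k}`: the coordinate indexed by `j` is the
evaluation of (a representative of) an element of `B_k` at the point whose `i`-th
coordinate is the `i`-th binary digit of `j`.  This agrees with the recursive
definition `Φ_k(α + β v_k) = (Φ_{k-1}(α), Φ_{k-1}(α + β))`, `Φ_0 = id`. -/
noncomputable def Phi (p r k : ℕ) [Fact p.Prime] :
    B p r k →+* (Fin (2 ^ k) → GaloisField p r) :=
  Ideal.Quotient.lift (relIdeal p r k) (PhiAux p r k) (fun _ ha => PhiAux_cond p r k ha)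

section Aux

variable (p r k : ℕ) [Fact p.Prime]

noncomputable def cC : GaloisField p r →+* B p r k :=
  (Ideal.Quotient.mk (relIdeal p r k)).comp
    (C : GaloisField p r →+* MvPolynomial (Fin k) (GaloisField p r))

noncomputable def eIdem (j : Fin (2 ^ k)) : B p r k :=
  ∏ i : Fin k, if Nat.testBit (j : ℕ) (i : ℕ) then v p r k i else 1 - v p r k i

lemma Phi_mk (f : MvPolynomial (Fin k) (GaloisField p r)) :
    Phi p r k (Ideal.Quotient.mk _ f) = PhiAux p r k f :=
  Ideal.Quotient.lift_mk _ _ _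

lemma Phi_v (i : Fin k) (j : Fin (2 ^ k)) :
    Phi p r k (v p r k i) j = if Nat.testBit (j : ℕ) (i : ℕ) then 1 else 0 := by
  simp only [v, Phi_mk]
  show eval₂Hom (RingHom.id (GaloisField p r))
    (fun i : Fin k => if Nat.testBit (j : ℕ) (i : ℕ) then 1 else 0) (X i) = _
  simp

lemma Phi_cC (c : GaloisField p r) (j : Fin (2 ^ k)) :
    Phi p r k (cC p r k c) j = c := by
  rw [cC, RingHom.comp_apply, Phi_mk]
  show eval₂Hom (RingHom.id (GaloisField p r))
    (fun i : Fin k => if Nat.testBit (j : ℕ) (i : ℕ) then 1 else 0) (C c) = c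
  simp

lemma bit_inj : Function.Injective
    (fun (j : Fin (2 ^ k)) (i : Fin k) => Nat.testBit (j : ℕ) (i : ℕ)) := by
  intro a b h
  apply Fin.ext
  apply Nat.eq_of_testBit_eq
  intro i
  by_cases hi : i < k
  · exact congrFun h ⟨i, hi⟩
  · have h2 : (2 : ℕ) ^ k ≤ 2 ^ i := Nat.pow_le_pow_right (by norm_num) (le_of_not_gt hi)
    rw [Nat.testBit_eq_false_of_lt (lt_of_lt_of_le a.isLt h2),
      Nat.testBit_eq_false_of_lt (lt_of_lt_of_le b.isLt h2)]

lemma v_mul_eIdem (i : Fin k) (j : Fin (2 ^ k)) :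
    v p r k i * eIdem p r k j =
      if Nat.testBit (j : ℕ) (i : ℕ) then eIdem p r k j else 0 := by
  unfold eIdem
  rw [← Finset.mul_prod_erase Finset.univ _ (Finset.mem_univ i), ← mul_assoc]
  by_cases h : Nat.testBit (j : ℕ) (i : ℕ)
  · rw [if_pos h, if_pos h]
    have hv : v p r k i * v p r k i = v p r k i := by
      rw [← sq]; exact v_idem p r k i
    rw [hv]
  · rw [if_neg h, if_neg h]
    have hv : v p r k i * (1 - v p r k i) = 0 := by
      have hidem := v_idem p r k i
      rw [sq] at hidem
      rw [mul_sub, mul_one, hidem, sub_self]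
    rw [hv, zero_mul]

lemma mul_eIdem (a : B p r k) (j : Fin (2 ^ k)) :
    a * eIdem p r k j = cC p r k (Phi p r k a j) * eIdem p r k j := by
  obtain ⟨f, rfl⟩ := Ideal.Quotient.mk_surjective a
  induction f using MvPolynomial.induction_on with
  | C c =>
      rw [show (Ideal.Quotient.mk (relIdeal p r k)) (MvPolynomial.C c) = cC p r k c from rfl,
        Phi_cC]
  | add f g hf hg =>
      rw [map_add, add_mul, hf, hg, map_add, Pi.add_apply, map_add, add_mul]
  | mul_X f i hf =>
      rw [map_mul, map_mul]
      have hX : (Ideal.Quotient.mk (relIdeal p r k)) (MvPolynomial.X i) = v p r k i := rfl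
      rw [hX, mul_assoc, v_mul_eIdem, Pi.mul_apply, Phi_v]
      by_cases h : Nat.testBit (j : ℕ) (i : ℕ)
      · rw [if_pos h, if_pos h, hf, mul_one]
      · rw [if_neg h, if_neg h, mul_zero, mul_zero, map_zero, zero_mul]

noncomputable def bitEquiv : Fin (2 ^ k) ≃ (Fin k → Bool) :=
  Equiv.ofBijective _ ((Fintype.bijective_iff_injective_and_card _).mpr
    ⟨bit_inj k, by simp⟩)

lemma sum_eIdem : ∑ j : Fin (2 ^ k), eIdem p r k j = 1 := by
  rw [Fintype.sum_equiv (bitEquiv k) (fun j => eIdem p r k j)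
    (fun g => ∏ i : Fin k, if g i then v p r k i else 1 - v p r k i) (fun j => rfl)]
  have hps := Finset.prod_univ_sum (fun _ : Fin k => (Finset.univ : Finset Bool))
    (fun i b => if b then v p r k i else 1 - v p r k i)
  rw [Fintype.piFinset_univ] at hps
  rw [← hps]
  refine Finset.prod_eq_one fun i _ => ?_
  rw [Fintype.sum_bool]
  simp

lemma Phi_eIdem (j j' : Fin (2 ^ k)) :
    Phi p r k (eIdem p r k j) j' = if j' = j then 1 else 0 := by
  have hprod : Phi p r k (eIdem p r k j) j' =
      ∏ i : Fin k, (if Nat.testBit (j : ℕ) (i : ℕ) = Nat.testBit (j' : ℕ) (i : ℕ)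
        then (1 : GaloisField p r) else 0) := by
    unfold eIdem
    rw [map_prod, Finset.prod_apply]
    refine Finset.prod_congr rfl fun i _ => ?_
    by_cases h : Nat.testBit (j : ℕ) (i : ℕ) <;>
      by_cases h' : Nat.testBit (j' : ℕ) (i : ℕ) <;>
        simp [h, h', Phi_v, map_sub, Pi.sub_apply]
  rw [hprod]
  by_cases hj : j' = j
  · simp [hj]
  · rw [if_neg hj]
    have hne : ¬ ∀ i : Fin k, Nat.testBit (j : ℕ) (i : ℕ) = Nat.testBit (j' : ℕ) (i : ℕ) := by
      intro hall
      exact hj (bit_inj k (funext fun i => hall i)).symm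
    push_neg at hne
    obtain ⟨i, hi⟩ := hne
    exact Finset.prod_eq_zero (Finset.mem_univ i) (if_neg hi)

lemma B_repr (a : B p r k) :
    a = ∑ j : Fin (2 ^ k), cC p r k (Phi p r k a j) * eIdem p r k j := by
  conv_lhs => rw [← mul_one a, ← sum_eIdem p r k]
  rw [Finset.mul_sum]
  exact Finset.sum_congr rfl fun j _ => mul_eIdem p r k a j

lemma Phi_inj : Function.Injective (Phi p r k) := by
  intro a b h
  rw [B_repr p r k a, B_repr p r k b, h]

lemma B_finite : Finite (B p r k) :=
  Finite.of_injective _ (Phi_inj p r k)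

end Aux

/-- Let `θ = Θ_S ∘ Λ_{π,t}` and let `σ_θ` be the permutation of `{1,…,2^k}` with
`Φ_k(θ(a))_i = (Φ_k(a)_{σ_θ⁻¹(i)})^{p^t}`.  Let `Ξ_θ` act on `F_{p^r}^{n·2^k}`
(viewed as `n` blocks of length `2^k`) by cyclically shifting the blocks by one block and
applying `y ↦ ((y_{σ_θ⁻¹(j)})^{p^t})_j` to each block.  Then for a `B_k`-submodule `C` of
`B_k^n`, the image `Φ̄_k(C)` is fixed setwise by `Ξ_θ` iff `C` is `θ`-cyclic. -/



theorem stmt_14 (p r k n : ℕ) [Fact p.Prime] [NeZero n] (hr : 1 ≤ r)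
    (S : Finset (Fin k)) (π : Equiv.Perm (Fin k)) (t : ℕ) (ht : t < r)
    (σ : Equiv.Perm (Fin (2 ^ k)))
    (hσ : ∀ (a : B p r k) (i : Fin (2 ^ k)),
      Phi p r k (Th p r k S (Lam p r k π t a)) i = Phi p r k a (σ.symm i) ^ p ^ t)
    (C : Submodule (B p r k) (Fin n → B p r k)) :
    (fun y : Fin n → Fin (2 ^ k) → GaloisField p r =>
        fun b j => y (b - 1) (σ.symm j) ^ p ^ t) ''
          ((fun a : Fin n → B p r k => fun b => Phi p r k (a b)) ''
            (C : Set (Fin n → B p r k))) =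
        (fun a : Fin n → B p r k => fun b => Phi p r k (a b)) ''
          (C : Set (Fin n → B p r k)) ↔
      ∀ c ∈ C, (fun b : Fin n => Th p r k S (Lam p r k π t (c (b - 1)))) ∈ C := by
  haveI : Finite (B p r k) := B_finite p r k
  have hfr : Function.Injective fun x : GaloisField p r => x ^ p ^ t := by
    have he : (fun x : GaloisField p r => x ^ p ^ t) =
        iterateFrobenius (GaloisField p r) p t := by
      funext x; rw [iterateFrobenius_def]
    rw [he]
    exact (iterateFrobenius (GaloisField p r) p t).injective
  have hθinj : Function.Injective (fun a : B p r k => Th p r k S (Lam p r k π t a)) := by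
    intro a b h
    simp only at h
    apply Phi_inj p r k
    funext j
    have h1 := hσ a (σ j)
    have h2 := hσ b (σ j)
    rw [h] at h1
    rw [Equiv.symm_apply_apply] at h1 h2
    exact hfr (h1.symm.trans h2)
  have hFinj : Function.Injective
      (fun a : Fin n → B p r k => fun b => Phi p r k (a b)) := by
    intro a b h
    funext b'
    exact Phi_inj p r k (congrFun h b')
  have hcomm : ∀ c : Fin n → B p r k,
      (fun b j => Phi p r k (c (b - 1)) (σ.symm j) ^ p ^ t) =
      (fun b => Phi p r k (Th p r k S (Lam p r k π t (c (b - 1))))) := by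
    intro c
    funext b j
    exact (hσ (c (b - 1)) j).symm
  have hTinj : Function.Injective
      (fun c : Fin n → B p r k => fun b : Fin n => Th p r k S (Lam p r k π t (c (b - 1)))) := by
    intro a b h
    simp only at h
    funext b'
    have h1 := congrFun h (b' + 1)
    rw [add_sub_cancel_right] at h1
    exact hθinj h1
  constructor
  · intro hEq c hc
    have hmem : (fun b j => Phi p r k (c (b - 1)) (σ.symm j) ^ p ^ t) ∈
        (fun a : Fin n → B p r k => fun b => Phi p r k (a b)) ''
          (C : Set (Fin n → B p r k)) := by
      rw [← hEq]
      exact Set.mem_image_of_mem _ (Set.mem_image_of_mem _ hc)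
    obtain ⟨a, ha, hFa⟩ := hmem
    rw [hcomm c] at hFa
    have := hFinj hFa
    rw [this] at ha
    exact ha
  · intro hC
    apply Set.Subset.antisymm
    · rintro _ ⟨_, ⟨c, hc, rfl⟩, rfl⟩
      exact ⟨_, hC c hc, (hcomm c).symm⟩
    · rintro _ ⟨c, hc, rfl⟩
      have hg : Function.Injective
          (fun x : C => (⟨fun b => Th p r k S (Lam p r k π t (x.1 (b - 1))),
            hC x.1 x.2⟩ : C)) := by
        intro x y hxy
        exact Subtype.ext (hTinj (congrArg Subtype.val hxy))
      obtain ⟨⟨c', hc'⟩, hgc⟩ := Finite.surjective_of_injective hg ⟨c, hc⟩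
      have hval : (fun b : Fin n => Th p r k S (Lam p r k π t (c' (b - 1)))) = c :=
        congrArg Subtype.val hgc
      refine ⟨fun b => Phi p r k (c' b), ⟨c', hc', rfl⟩, ?_⟩
      funext b j
      show Phi p r k (c' (b - 1)) (σ.symm j) ^ p ^ t = Phi p r k (c b) j
      rw [← hσ (c' (b - 1)) j]
      have h1 := congrFun hval b
      rw [h1]
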